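/- Let X, Y, G, H be finite sets with |X| = N, |Y| = K, |G| = L, |H| = W, where N ≥ 2. Suppose (g_y, h_y)_{y∈Y} is a scrambling permutation pair with parameters (N, K, W, L) and collision probability p. Then p = (L−1)/(N−1). -/

import Mathlib

/-- For a scrambling permutation pair with parameters (N, K, W, L)
(with N ≥ 2), the collision probability p equals (L−1)/(N−1).
(Y is nonempty so that the uniform probability over y ∈ Y is well defined.) -/
theorem scrambling_collision_probability
    {X Y G H : Type*} [Fintype X] [Fintype Y] [Nonempty Y] [Fintype G] [Fintype H]
    [DecidableEq H]
    {N K L W : ℕ}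
    (hX : Fintype.card X = N) (hY : Fintype.card Y = K)
    (hG : Fintype.card G = L) (hH : Fintype.card H = W)
    (hN : 2 ≤ N)
    (g : Y → X → G) (h : Y → X → H)
    (hbij : ∀ y : Y, Function.Bijective (fun x : X => (g y x, h y x)))
    (p : ℝ)
    (hcol : ∀ x₁ x₂ : X, x₁ ≠ x₂ →
      ((Finset.univ.filter (fun y : Y => h y x₁ = h y x₂)).card : ℝ) = p * K) :
    p = ((L : ℝ) - 1) / ((N : ℝ) - 1) := by
  classical
  have hXne : Nonempty X := by
    rw [← Fintype.card_pos_iff, hX]; omega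
  obtain ⟨x0⟩ := hXne
  obtain ⟨y0⟩ := (inferInstance : Nonempty Y)
  have hKpos : 0 < K := by rw [← hY]; exact Fintype.card_pos
  -- fiber lemma: every fiber of h y has size L
  have fiber : ∀ (y : Y) (b : H),
      (Finset.univ.filter (fun x : X => h y x = b)).card = L := by
    intro y b
    have e := Equiv.ofBijective _ (hbij y)
    have h1 : (Finset.univ.filter (fun x : X => h y x = b)).card
        = (Finset.univ.filter (fun q : G × H => q.2 = b)).card := by
      apply Finset.card_bij (fun x _ => (g y x, h y x))
      · intro a ha
        simp only [Finset.mem_filter, Finset.mem_univ, true_and] at ha ⊢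
        exact ha
      · intro a _ a' _ hh
        exact (hbij y).injective hh
      · intro q hq
        obtain ⟨x, hx⟩ := (hbij y).surjective q
        refine ⟨x, ?_, hx⟩
        simp only [Finset.mem_filter, Finset.mem_univ, true_and] at hq ⊢
        have h3 : (g y x, h y x).2 = q.2 := congrArg Prod.snd hx
        exact h3.trans hq
    have h2 : (Finset.univ.filter (fun q : G × H => q.2 = b))
        = Finset.univ.map ⟨fun a : G => (a, b), fun a a' hh => by
            simpa using congrArg Prod.fst hh⟩ := by
      ext q
      simp only [Finset.mem_filter, Finset.mem_univ, true_and, Finset.mem_map,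
        Function.Embedding.coeFn_mk]
      constructor
      · intro hq
        exact ⟨q.1, by rw [← hq]; rfl⟩
      · rintro ⟨a, -, rfl⟩
        rfl
    rw [h1, h2, Finset.card_map, Finset.card_univ, hG]
  have hL1 : 1 ≤ L := by
    have hf := fiber y0 (h y0 x0)
    have hm : x0 ∈ Finset.univ.filter (fun x : X => h y0 x = h y0 x0) := by simp
    have := Finset.card_pos.mpr ⟨x0, hm⟩
    omega
  -- per (y, x1) count over x2
  have perpair : ∀ (y : Y) (x1 : X),
      ((Finset.univ.erase x1).filter (fun x2 : X => h y x1 = h y x2)).card = L - 1 := by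
    intro y x1
    have heq : (Finset.univ.erase x1).filter (fun x2 : X => h y x1 = h y x2)
        = (Finset.univ.filter (fun x : X => h y x = h y x1)).erase x1 := by
      ext x
      simp only [Finset.mem_filter, Finset.mem_erase, Finset.mem_univ, true_and, and_true]
      constructor
      · rintro ⟨hne, heqx⟩; exact ⟨hne, heqx.symm⟩
      · rintro ⟨hne, heqx⟩; exact ⟨hne, heqx.symm⟩
    rw [heq, Finset.card_erase_of_mem (by simp), fiber]
  -- double counting
  set S : ℕ := ∑ x1 : X, ∑ x2 ∈ Finset.univ.erase x1,
      (Finset.univ.filter (fun y : Y => h y x1 = h y x2)).card with hS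
  have count1 : S = K * (N * (L - 1)) := by
    have step : S = ∑ y : Y, ∑ x1 : X,
        ((Finset.univ.erase x1).filter (fun x2 : X => h y x1 = h y x2)).card := by
      rw [hS]
      have : ∀ x1 : X, ∑ x2 ∈ Finset.univ.erase x1,
          (Finset.univ.filter (fun y : Y => h y x1 = h y x2)).card
          = ∑ y : Y, ((Finset.univ.erase x1).filter (fun x2 : X => h y x1 = h y x2)).card := by
        intro x1
        simp only [Finset.card_filter]
        rw [Finset.sum_comm]
      rw [Finset.sum_congr rfl (fun x1 _ => this x1), Finset.sum_comm]
    rw [step]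
    simp only [perpair]
    simp [Finset.sum_const, Finset.card_univ, hX, hY, mul_comm]
  have count2 : (S : ℝ) = (N : ℝ) * ((N : ℝ) - 1) * (p * K) := by
    rw [hS]
    push_cast
    have : ∀ x1 : X, ∑ x2 ∈ Finset.univ.erase x1,
        ((Finset.univ.filter (fun y : Y => h y x1 = h y x2)).card : ℝ)
        = ((N : ℝ) - 1) * (p * K) := by
      intro x1
      rw [Finset.sum_congr rfl (fun x2 hx2 => hcol x1 x2
        (Ne.symm (Finset.ne_of_mem_erase hx2))), Finset.sum_const, nsmul_eq_mul,
        Finset.card_erase_of_mem (Finset.mem_univ _), Finset.card_univ, hX]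
      have : ((N - 1 : ℕ) : ℝ) = (N : ℝ) - 1 := by
        have : (1 : ℕ) ≤ N := by omega
        push_cast [this]; ring
      rw [this]
    rw [Finset.sum_congr rfl (fun x1 _ => this x1), Finset.sum_const, nsmul_eq_mul,
      Finset.card_univ, hX]
    ring
  have hLcast : ((L - 1 : ℕ) : ℝ) = (L : ℝ) - 1 := by
    push_cast [hL1]; ring
  have key : (K : ℝ) * ((N : ℝ) * ((L : ℝ) - 1)) = (N : ℝ) * ((N : ℝ) - 1) * (p * K) := by
    rw [← count2, count1]; push_cast [hLcast]; ring
  have hKne : (K : ℝ) ≠ 0 := Nat.cast_ne_zero.mpr (by omega)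
  have hNne : (N : ℝ) ≠ 0 := Nat.cast_ne_zero.mpr (by omega)
  have hN1ne : (N : ℝ) - 1 ≠ 0 := by
    have : (2 : ℝ) ≤ (N : ℝ) := by exact_mod_cast hN
    linarith
  have key2 : ((K : ℝ) * N) * ((L : ℝ) - 1) = ((K : ℝ) * N) * (((N : ℝ) - 1) * p) := by
    linear_combination key
  have key3 := mul_left_cancel₀ (mul_ne_zero hKne hNne) key2
  rw [eq_div_iff hN1ne]
  linarith [key3]
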